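/- Fix $r,\mu>0$ with $\mu> e$ and $0\le\beta<1$, and let $S:[0,\infty)\to[0,\infty)$ satisfy $b_0 s(s+1)^{\beta-1}\le S(s)\le b_1 s(s+1)^{\beta-1}$ for all $s>0$ with constants $0<b_0\le b_1$. Define $G(s)=\int_{r/\mu}^{s}\int_{r/\mu}^{\rho}\frac{1}{S(\sigma)}\,d\sigma\,d\rho$ for $s>0$. Then for all $s>0$, $G(s)\le \frac{2}{b_0}s\ln s+\frac{2s}{b_0}\ln\frac{\mu}{r}+\frac{2s^{2-\beta}}{b_0(1-\beta)(2-\beta)}+\frac{2r}{b_0\mu}+\frac{2r^{2-\beta}}{b_0(2-\beta)\mu^{2-\beta}}$. -/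

import Mathlib

open MeasureTheory intervalIntegral Real Set

set_option maxHeartbeats 1000000 in
theorem stmt_4 (r μ β b0 b1 : ℝ) (hr : 0 < r) (hμ : 0 < μ) (hμe : Real.exp 1 < μ)
    (hβ0 : 0 ≤ β) (hβ1 : β < 1) (hb0 : 0 < b0) (hb01 : b0 ≤ b1)
    (S : ℝ → ℝ) (hS_cont : ContinuousOn S (Set.Ioi 0))
    (hS : ∀ s : ℝ, 0 < s →
      b0 * s * (s + 1) ^ (β - 1) ≤ S s ∧ S s ≤ b1 * s * (s + 1) ^ (β - 1))
    (G : ℝ → ℝ)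
    (hG : ∀ s : ℝ, 0 < s → G s = ∫ ρ in (r / μ)..s, ∫ σ in (r / μ)..ρ, 1 / S σ) :
    ∀ s : ℝ, 0 < s →
      G s ≤ 2 / b0 * s * Real.log s + 2 * s / b0 * Real.log (μ / r)
        + 2 * s ^ (2 - β) / (b0 * (1 - β) * (2 - β)) + 2 * r / (b0 * μ)
        + 2 * r ^ (2 - β) / (b0 * (2 - β) * μ ^ (2 - β)) := by
  intro s hs
  set a : ℝ := r / μ with ha_def
  have ha : 0 < a := div_pos hr hμ
  have h1β : (0:ℝ) < 1 - β := by linarith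
  have h2β : (0:ℝ) < 2 - β := by linarith
  -- positivity of S on (0,∞)
  have hSpos : ∀ σ : ℝ, 0 < σ → 0 < S σ := by
    intro σ hσ
    have h := (hS σ hσ).1
    have h2 : 0 < b0 * σ * (σ + 1) ^ (β - 1) := by
      have : (0:ℝ) < (σ + 1) ^ (β - 1) := Real.rpow_pos_of_pos (by linarith) _
      positivity
    linarith
  -- the bounding function
  set g : ℝ → ℝ := fun σ => 2 / b0 * (σ⁻¹ + σ ^ (-β)) with hg_def
  -- pointwise bound 1/S ≤ g on (0,∞)
  have hbound : ∀ σ : ℝ, 0 < σ → 1 / S σ ≤ g σ := by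
    intro σ hσ
    have hσ1 : (0:ℝ) < σ + 1 := by linarith
    have hS1 := (hS σ hσ).1
    have hden : 0 < b0 * σ * (σ + 1) ^ (β - 1) := by
      have : (0:ℝ) < (σ + 1) ^ (β - 1) := Real.rpow_pos_of_pos hσ1 _
      positivity
    have step1 : 1 / S σ ≤ 1 / (b0 * σ * (σ + 1) ^ (β - 1)) :=
      one_div_le_one_div_of_le hden hS1
    have hrw : (σ + 1) ^ (β - 1) = ((σ + 1) ^ (1 - β))⁻¹ := by
      rw [← Real.rpow_neg hσ1.le]; ring_nf
    have hkey : (σ + 1) ^ (1 - β) ≤ 2 * (1 + σ ^ (1 - β)) := by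
      rcases le_total σ 1 with h | h
      · have : (σ + 1) ^ (1 - β) ≤ (2:ℝ) ^ (1 - β) :=
          Real.rpow_le_rpow (by linarith) (by linarith) h1β.le
        have h2' : (2:ℝ) ^ (1 - β) ≤ 2 := by
          calc (2:ℝ) ^ (1 - β) ≤ (2:ℝ) ^ (1:ℝ) :=
                Real.rpow_le_rpow_of_exponent_le one_le_two (by linarith)
            _ = 2 := Real.rpow_one 2
        have h3' : (0:ℝ) ≤ σ ^ (1 - β) := Real.rpow_nonneg hσ.le _
        linarith
      · have h1 : (σ + 1) ^ (1 - β) ≤ (2 * σ) ^ (1 - β) :=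
          Real.rpow_le_rpow (by linarith) (by linarith) h1β.le
        have h2' : (2 * σ) ^ (1 - β) = 2 ^ (1 - β) * σ ^ (1 - β) :=
          Real.mul_rpow (by norm_num) hσ.le
        have h3' : (2:ℝ) ^ (1 - β) ≤ 2 := by
          calc (2:ℝ) ^ (1 - β) ≤ (2:ℝ) ^ (1:ℝ) :=
                Real.rpow_le_rpow_of_exponent_le one_le_two (by linarith)
            _ = 2 := Real.rpow_one 2
        have h4' : (0:ℝ) ≤ σ ^ (1 - β) := Real.rpow_nonneg hσ.le _
        nlinarith
    have hrw2 : σ ^ (1 - β) = σ ^ (-β) * σ := by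
      rw [show (1 - β) = -β + 1 by ring, Real.rpow_add hσ, Real.rpow_one]
    calc 1 / S σ ≤ 1 / (b0 * σ * (σ + 1) ^ (β - 1)) := step1
      _ = (σ + 1) ^ (1 - β) / (b0 * σ) := by
          rw [hrw]; field_simp
      _ ≤ 2 * (1 + σ ^ (1 - β)) / (b0 * σ) := by
          exact div_le_div_of_nonneg_right hkey (by positivity)
      _ = g σ := by
          rw [hg_def]; simp only; rw [hrw2]; field_simp
  -- continuity and integrability of 1/S and g
  have hf_cont : ContinuousOn (fun σ : ℝ => 1 / S σ) (Set.Ioi 0) :=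
    continuousOn_const.div hS_cont (fun x hx => (hSpos x hx).ne')
  have hg_cont : ContinuousOn g (Set.Ioi 0) := by
    apply ContinuousOn.mul continuousOn_const
    apply ContinuousOn.add
    · exact continuousOn_inv₀.mono (fun x (hx : x ∈ Set.Ioi 0) => ne_of_gt hx)
    · intro x hx
      exact (Real.continuousAt_rpow_const x (-β) (Or.inl (ne_of_gt hx))).continuousWithinAt
  have hsub : ∀ u v : ℝ, 0 < u → 0 < v → Set.uIcc u v ⊆ Set.Ioi 0 := by
    intro u v hu hv x hx
    exact lt_of_lt_of_le (lt_min hu hv) hx.1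
  have hfi : ∀ u v : ℝ, 0 < u → 0 < v →
      IntervalIntegrable (fun σ : ℝ => 1 / S σ) volume u v := fun u v hu hv =>
    (hf_cont.mono (hsub u v hu hv)).intervalIntegrable
  have hgi : ∀ u v : ℝ, 0 < u → 0 < v → IntervalIntegrable g volume u v := fun u v hu hv =>
    (hg_cont.mono (hsub u v hu hv)).intervalIntegrable
  -- inner comparison
  have hcmp : ∀ u v : ℝ, 0 < u → 0 < v → u ≤ v →
      (∫ σ in u..v, 1 / S σ) ≤ ∫ σ in u..v, g σ := by
    intro u v hu hv huv
    apply intervalIntegral.integral_mono_on huv (hfi u v hu hv) (hgi u v hu hv)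
    intro x hx
    exact hbound x (lt_of_lt_of_le hu hx.1)
  set F : ℝ → ℝ := fun ρ => ∫ σ in a..ρ, 1 / S σ with hF_def
  set H : ℝ → ℝ := fun ρ => ∫ σ in a..ρ, g σ with hH_def
  have hFc : ContinuousOn F (Set.uIcc a s) :=
    intervalIntegral.continuousOn_primitive_interval' (hfi a s ha hs) left_mem_uIcc
  have hHc : ContinuousOn H (Set.uIcc a s) :=
    intervalIntegral.continuousOn_primitive_interval' (hgi a s ha hs) left_mem_uIcc
  -- outer comparison
  have hFH : (∫ ρ in a..s, F ρ) ≤ ∫ ρ in a..s, H ρ := by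
    rcases le_total a s with h | h
    · apply intervalIntegral.integral_mono_on h hFc.intervalIntegrable hHc.intervalIntegrable
      intro ρ hρ
      have hρ0 : 0 < ρ := lt_of_lt_of_le ha hρ.1
      exact hcmp a ρ ha hρ0 hρ.1
    · rw [intervalIntegral.integral_symm s a, intervalIntegral.integral_symm s a (f := H)]
      apply neg_le_neg
      have huIcc : Set.uIcc a s = Set.uIcc s a := Set.uIcc_comm a s
      apply intervalIntegral.integral_mono_on h
        (hHc.intervalIntegrable.symm) (hFc.intervalIntegrable.symm)
      intro ρ hρ
      have hρ0 : 0 < ρ := lt_of_lt_of_le hs hρ.1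
      have : (∫ σ in ρ..a, 1 / S σ) ≤ ∫ σ in ρ..a, g σ := hcmp ρ a hρ0 ha hρ.2
      rw [hF_def, hH_def]
      simp only
      rw [intervalIntegral.integral_symm ρ a (f := fun σ => 1 / S σ),
        intervalIntegral.integral_symm ρ a (f := g)]
      linarith
  -- explicit value of H on (0,∞)
  have hHval : ∀ ρ : ℝ, 0 < ρ → H ρ =
      2 / b0 * ((Real.log ρ - Real.log a) + (ρ ^ (1 - β) - a ^ (1 - β)) / (1 - β)) := by
    intro ρ hρ
    have h0 : (0:ℝ) ∉ Set.uIcc a ρ := fun h => lt_irrefl (0:ℝ) (hsub a ρ ha hρ h)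
    have hinv : IntervalIntegrable (fun σ : ℝ => σ⁻¹) volume a ρ :=
      intervalIntegrable_inv_iff.mpr (Or.inr h0)
    have hrp : IntervalIntegrable (fun σ : ℝ => σ ^ (-β)) volume a ρ :=
      intervalIntegrable_rpow' (by linarith)
    rw [hH_def]
    simp only [hg_def]
    rw [intervalIntegral.integral_const_mul, intervalIntegral.integral_add hinv hrp,
      integral_inv h0, integral_rpow (Or.inl (by linarith : (-1:ℝ) < -β)),
      Real.log_div (ne_of_gt hρ) (ne_of_gt ha), show -β + 1 = 1 - β by ring]
  -- the outer integral of the explicit bound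
  have hDval : (∫ ρ in a..s, H ρ)
      = 2 / b0 * ((s * Real.log s - a * Real.log a - s + a)
        + (-Real.log a - a ^ (1 - β) / (1 - β)) * (s - a)
        + (s ^ (2 - β) - a ^ (2 - β)) / (2 - β) / (1 - β)) := by
    have h0 : (0:ℝ) ∉ Set.uIcc a s := fun h => lt_irrefl (0:ℝ) (hsub a s ha hs h)
    have hcg : Set.EqOn H (fun ρ => 2 / b0 * Real.log ρ + 2 / (b0 * (1 - β)) * ρ ^ (1 - β)
        + 2 / b0 * (-Real.log a - a ^ (1 - β) / (1 - β))) (Set.uIcc a s) := by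
      intro ρ hρ
      rw [hHval ρ (hsub a s ha hs hρ)]
      have hb0' : b0 ≠ 0 := ne_of_gt hb0
      have h1β' : (1:ℝ) - β ≠ 0 := ne_of_gt h1β
      field_simp
      ring
    rw [intervalIntegral.integral_congr hcg]
    have i1 : IntervalIntegrable (fun ρ : ℝ => 2 / b0 * Real.log ρ) volume a s :=
      (continuousOn_const.mul (Real.continuousOn_log.mono
        (fun x hx => ne_of_gt (hsub a s ha hs hx)))).intervalIntegrable
    have i2 : IntervalIntegrable (fun ρ : ℝ => 2 / (b0 * (1 - β)) * ρ ^ (1 - β)) volume a s :=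
      (intervalIntegrable_rpow' (by linarith : (-1:ℝ) < 1 - β)).const_mul _
    have i3 : IntervalIntegrable (fun _ : ℝ => 2 / b0 * (-Real.log a - a ^ (1 - β) / (1 - β)))
        volume a s := intervalIntegrable_const
    rw [intervalIntegral.integral_add (i1.add i2) i3, intervalIntegral.integral_add i1 i2,
      intervalIntegral.integral_const_mul, intervalIntegral.integral_const_mul,
      integral_log, integral_rpow (Or.inl (by linarith : (-1:ℝ) < 1 - β)),
      intervalIntegral.integral_const, show (1:ℝ) - β + 1 = 2 - β by ring, smul_eq_mul]
    have hb0' : b0 ≠ 0 := ne_of_gt hb0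
    have h1β' : (1:ℝ) - β ≠ 0 := ne_of_gt h1β
    have h2β' : (2:ℝ) - β ≠ 0 := ne_of_gt h2β
    field_simp
    ring
  -- auxiliary facts for the final estimate
  have hA : (0:ℝ) < a ^ (1 - β) := Real.rpow_pos_of_pos ha _
  have hA2 : a ^ (2 - β) = a ^ (1 - β) * a := by
    rw [show (2:ℝ) - β = (1 - β) + 1 by ring, Real.rpow_add ha, Real.rpow_one]
  have hra : r ^ (2 - β) / μ ^ (2 - β) = a ^ (2 - β) := by
    rw [ha_def, Real.div_rpow hr.le hμ.le]
  have hloga : Real.log a = Real.log r - Real.log μ := Real.log_div (ne_of_gt hr) (ne_of_gt hμ)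
  have hlogμr : Real.log (μ / r) = Real.log μ - Real.log r :=
    Real.log_div (ne_of_gt hμ) (ne_of_gt hr)
  have hGs : G s = ∫ ρ in a..s, F ρ := by rw [hG s hs]
  rw [hGs]
  calc (∫ ρ in a..s, F ρ) ≤ ∫ ρ in a..s, H ρ := hFH
    _ = 2 / b0 * ((s * Real.log s - a * Real.log a - s + a)
        + (-Real.log a - a ^ (1 - β) / (1 - β)) * (s - a)
        + (s ^ (2 - β) - a ^ (2 - β)) / (2 - β) / (1 - β)) := hDval
    _ ≤ 2 / b0 * s * Real.log s + 2 * s / b0 * Real.log (μ / r)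
        + 2 * s ^ (2 - β) / (b0 * (1 - β) * (2 - β)) + 2 * r / (b0 * μ)
        + 2 * r ^ (2 - β) / (b0 * (2 - β) * μ ^ (2 - β)) := by
      have hb0' : b0 ≠ 0 := ne_of_gt hb0
      have h1β' : (1:ℝ) - β ≠ 0 := ne_of_gt h1β
      have h2β' : (2:ℝ) - β ≠ 0 := ne_of_gt h2β
      have key : (s * Real.log s - a * Real.log a - s + a)
          + (-Real.log a - a ^ (1 - β) / (1 - β)) * (s - a)
          + (s ^ (2 - β) - a ^ (2 - β)) / (2 - β) / (1 - β)
          ≤ s * Real.log s + s * (Real.log μ - Real.log r)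
            + s ^ (2 - β) / ((1 - β) * (2 - β)) + a + a ^ (2 - β) / (2 - β) := by
        have e3 : (s ^ (2 - β) - a ^ (2 - β)) / (2 - β) / (1 - β)
            = s ^ (2 - β) / ((1 - β) * (2 - β)) - a ^ (2 - β) / ((1 - β) * (2 - β)) := by
          rw [div_div, sub_div, mul_comm (2 - β) (1 - β)]
        have e2 : (-Real.log a - a ^ (1 - β) / (1 - β)) * (s - a)
            = -(Real.log a * (s - a)) - a ^ (1 - β) * s / (1 - β)
              + a ^ (2 - β) / (1 - β) := by
          rw [hA2]
          field_simp
          ring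
        have eq1 : a ^ (2 - β) / (1 - β) - a ^ (2 - β) / ((1 - β) * (2 - β))
            = a ^ (2 - β) / (2 - β) := by
          field_simp
          ring
        have pos1 : 0 ≤ a ^ (1 - β) * s / (1 - β) := by positivity
        rw [hloga] at *
        nlinarith [hs.le, pos1, e3, e2, eq1]
      have hmul := mul_le_mul_of_nonneg_left key (by positivity : (0:ℝ) ≤ 2 / b0)
      have hμ2 : μ ^ (2 - β) ≠ 0 := ne_of_gt (Real.rpow_pos_of_pos hμ _)
      have hRHSeq : 2 / b0 * s * Real.log s + 2 * s / b0 * Real.log (μ / r)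
          + 2 * s ^ (2 - β) / (b0 * (1 - β) * (2 - β)) + 2 * r / (b0 * μ)
          + 2 * r ^ (2 - β) / (b0 * (2 - β) * μ ^ (2 - β))
          = 2 / b0 * (s * Real.log s + s * (Real.log μ - Real.log r)
            + s ^ (2 - β) / ((1 - β) * (2 - β)) + a + a ^ (2 - β) / (2 - β)) := by
        rw [hlogμr, ← hra, ha_def]
        field_simp
      rw [hRHSeq]
      exact hmul
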